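/- Let n > 0 and m,k ≥ 0 be integers, M ∈ matr_*(n,m,k) a pointed matrix, C a finitely complete pointed category, and 𝓜 a class of monomorphisms in C stable under pullbacks. Then the following are equivalent: (i) every relation r : R ↣ Xⁿ belonging to 𝓜 is M-closed; (ii) every relation r : R ↣ X₁ × ⋯ × X_n belonging to 𝓜 is strictly M-closed. -/

import Mathlib

open CategoryTheory CategoryTheory.Limits

universe w v u

/-- A pointed extended matrix `M ∈ matr_*(n,m,k)`: `n > 0` rows, `m` left
columns and one right column, with entries in `{∗, x₁, …, x_k}` (modelled as
`Option (Fin k)`, where `none` is `∗`). `matr_*` is the union over all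
`n,m,k`, i.e. the type `MatrStar`. -/
structure MatrStar where
  n : ℕ
  m : ℕ
  k : ℕ
  npos : 0 < n
  left : Fin n → Fin m → Option (Fin k)
  right : Fin n → Option (Fin k)

namespace MatrStar

variable {C : Type u} [Category.{v} C] [HasZeroMorphisms C]

/-- A relation `r : R ⟶ P` in a pointed category, where `pr` exhibits `P` as
the `n`-fold product `Xⁿ`, is `M`-closed: for every object `Z` and every
interpretation `f : {∗,x₁,…,x_k} → C(Z,X)` with `f ∗ = 0`, if for every left
column `j` the induced morphism `Z ⟶ Xⁿ` factors through `r`, then so does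
the morphism induced by the right column. -/
def IsClosed (M : MatrStar) {X P R : C} (pr : Fin M.n → (P ⟶ X))
    (hP : IsLimit (Fan.mk P pr)) (r : R ⟶ P) : Prop :=
  ∀ (Z : C) (f : Option (Fin M.k) → (Z ⟶ X)), f none = 0 →
    ((∀ j : Fin M.m, ∃ g : Z ⟶ R,
        g ≫ r = hP.lift (Fan.mk Z (fun i => f (M.left i j)))) →
    ∃ g : Z ⟶ R, g ≫ r = hP.lift (Fan.mk Z (fun i => f (M.right i))))

/-- A relation `r : R ⟶ P`, where `pr` exhibits `P` as the product
`X₁ × ⋯ × X_n` of a family `X : Fin n → C`, is strictly `M`-closed: for every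
object `Z` and every row-wise interpretation `fᵢ : {∗,x₁,…,x_k} → C(Z,Xᵢ)`
with `fᵢ ∗ = 0`, if every left column's induced morphism factors through `r`,
then so does the right column's induced morphism. -/
def IsStrictClosed (M : MatrStar) {X : Fin M.n → C} {P R : C}
    (pr : ∀ i, P ⟶ X i) (hP : IsLimit (Fan.mk P pr)) (r : R ⟶ P) : Prop :=
  ∀ (Z : C) (f : ∀ i, Option (Fin M.k) → (Z ⟶ X i)), (∀ i, f i none = 0) →
    ((∀ j : Fin M.m, ∃ g : Z ⟶ R,
        g ≫ r = hP.lift (Fan.mk Z (fun i => f i (M.left i j)))) →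
    ∃ g : Z ⟶ R, g ≫ r = hP.lift (Fan.mk Z (fun i => f i (M.right i))))

/-- `C` has `M`-closed `W`-relations: every `n`-ary relation `r : R ⟶ Xⁿ`
belonging to the class of monomorphisms `W` is `M`-closed. -/
def HasClosedRels (M : MatrStar) (C : Type u) [Category.{v} C]
    [HasZeroMorphisms C] (W : MorphismProperty C) : Prop :=
  ∀ (X P R : C) (pr : Fin M.n → (P ⟶ X)) (hP : IsLimit (Fan.mk P pr))
    (r : R ⟶ P), W r → M.IsClosed pr hP r

/-- `C` has `S`-closed `W`-relations. -/
def HasSClosedRels (S : Set MatrStar) (C : Type u) [Category.{v} C]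
    [HasZeroMorphisms C] (W : MorphismProperty C) : Prop :=
  ∀ M ∈ S, HasClosedRels M C W

end MatrStar

/-- The class of strong monomorphisms of `C`, as a `MorphismProperty`. -/
def strongMonos (C : Type u) [Category.{v} C] : MorphismProperty C :=
  fun _ _ f => StrongMono f

/-- For a pointed matrix `M ∈ matr_*(n,m,k)`, a finitely complete
pointed category `C` and a class `W` of monomorphisms of `C` stable under
pullbacks, `C` has `M`-closed `W`-relations (every relation `r : R ↣ Xⁿ` in
`W` is `M`-closed) if and only if `C` has strictly `M`-closed `W`-relations
(every relation `r : R ↣ X₁ × ⋯ × X_n` in `W` is strictly `M`-closed). -/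
theorem closed_iff_strictClosed_pointed (M : MatrStar) (C : Type u)
    [Category.{v} C] [HasFiniteLimits C] [HasZeroObject C] [HasZeroMorphisms C]
    (W : MorphismProperty C)
    (hW_mono : ∀ ⦃A B : C⦄ (f : A ⟶ B), W f → Mono f)
    (hW_pb : W.IsStableUnderBaseChange) :
    (∀ (X P R : C) (pr : Fin M.n → (P ⟶ X)) (hP : IsLimit (Fan.mk P pr))
        (r : R ⟶ P), W r → M.IsClosed pr hP r) ↔
    (∀ (X : Fin M.n → C) (P R : C) (pr : ∀ i, P ⟶ X i)
        (hP : IsLimit (Fan.mk P pr)) (r : R ⟶ P), W r → M.IsStrictClosed pr hP r) := by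
  constructor
  · -- closed ⇒ strictly closed
    intro h X P R pr hP r hr
    haveI := hW_pb
    intro Z f hf0 hcols
    -- `Y = X₁ × ⋯ × X_n` and `Q = Yⁿ`
    set Y : C := ∏ᶜ X with hY
    set Q : C := ∏ᶜ (fun _ : Fin M.n => Y) with hQdef
    let hQ : IsLimit (Fan.mk Q (Pi.π (fun _ : Fin M.n => Y))) :=
      productIsProduct (fun _ : Fin M.n => Y)
    let q : Q ⟶ P := hP.lift (Fan.mk Q (fun i => Pi.π _ i ≫ Pi.π X i))
    have hq : ∀ i : Fin M.n, q ≫ pr i = Pi.π (fun _ : Fin M.n => Y) i ≫ Pi.π X i := by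
      intro i
      exact hP.fac (Fan.mk Q (fun i => Pi.π _ i ≫ Pi.π X i)) ⟨i⟩
    have hr' : W (pullback.fst q r) := MorphismProperty.pullback_fst q r hr
    have hclosed := h Y Q (pullback q r) (Pi.π _) hQ (pullback.fst q r) hr'
    -- the one-object interpretation
    let F : Option (Fin M.k) → (Z ⟶ Y) := fun b => Pi.lift (fun i => f i b)
    have hF0 : F none = 0 := by
      apply Pi.hom_ext
      intro i
      simp [F, hf0 i]
    -- key compatibility: columns for `F` compose with `q` to columns for `f`
    have key : ∀ a : Fin M.n → Option (Fin M.k),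
        hQ.lift (Fan.mk Z (fun i => F (a i))) ≫ q =
          hP.lift (Fan.mk Z (fun i => f i (a i))) := by
      intro a
      apply hP.hom_ext
      rintro ⟨i⟩
      have h1 : hP.lift (Fan.mk Z (fun i => f i (a i))) ≫ pr i = f i (a i) :=
        hP.fac (Fan.mk Z (fun i => f i (a i))) ⟨i⟩
      have h2 : hQ.lift (Fan.mk Z (fun i => F (a i))) ≫
          Pi.π (fun _ : Fin M.n => Y) i = F (a i) :=
        hQ.fac (Fan.mk Z (fun i => F (a i))) ⟨i⟩
      show _ ≫ pr i = _ ≫ pr i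
      rw [h1, Category.assoc, hq i, ← Category.assoc, h2]
      simp [F]
    -- apply M-closedness
    have hcolsQ : ∀ j : Fin M.m, ∃ g : Z ⟶ pullback q r,
        g ≫ pullback.fst q r = hQ.lift (Fan.mk Z (fun i => F (M.left i j))) := by
      intro j
      obtain ⟨g, hg⟩ := hcols j
      refine ⟨pullback.lift (hQ.lift (Fan.mk Z (fun i => F (M.left i j)))) g ?_, ?_⟩
      · rw [key (fun i => M.left i j), hg]
      · exact pullback.lift_fst _ _ _
    obtain ⟨g0, hg0⟩ := hclosed Z F hF0 hcolsQ
    refine ⟨g0 ≫ pullback.snd q r, ?_⟩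
    rw [Category.assoc, ← pullback.condition, ← Category.assoc, hg0,
      key (fun i => M.right i)]
  · -- strictly closed ⇒ closed
    intro h X P R pr hP r hr
    intro Z f hf0 hcols
    exact h (fun _ => X) P R pr hP r hr Z (fun _ => f) (fun _ => hf0) hcols
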